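/- Let m ≥ 1 be odd and let r ≥ 3 be odd. Then M(mK_r) = mr²(mr+1)²/8 − mr(mr+1)(2mr+1)/12 (an equality of rational numbers). -/

import Mathlib

open Finset

/-- The product-sum M(f) of a vertex labeling: the sum of `f u * f v` over all edges
`{u,v}` of `G`, each edge counted exactly once. -/
noncomputable def prodSum {V : Type*} [Fintype V] (G : SimpleGraph V) (f : V → ℕ) : ℕ := by
  classical
  exact ∑ e ∈ G.edgeFinset, Sym2.lift ⟨fun u v => f u * f v, fun u v => Nat.mul_comm _ _⟩ e

/-- A labeling of a graph on `V`: a bijection from the vertices onto `{1,…,|V|}`. -/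
def IsLabeling (V : Type*) [Fintype V] (f : V → ℕ) : Prop :=
  Set.BijOn f Set.univ (Set.Icc 1 (Fintype.card V))

/-- MinPS of `G`: the minimum of `M(f)` over all labelings `f`. -/
noncomputable def minPS {V : Type*} [Fintype V] (G : SimpleGraph V) : ℕ :=
  sInf { m | ∃ f : V → ℕ, IsLabeling V f ∧ prodSum G f = m }

/-- `mK_r`: the vertex-disjoint union of `m` copies of the complete graph `K_r`.
Vertex `(i, x)` lies in the `i`-th copy; two vertices are adjacent iff they are
distinct and lie in the same copy. -/
def mKGraph (m r : ℕ) : SimpleGraph (Fin m × Fin r) where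
  Adj a b := a.1 = b.1 ∧ a.2 ≠ b.2
  symm := ⟨fun a b h => ⟨h.1.symm, h.2.symm⟩⟩
  loopless := ⟨fun a h => h.2 rfl⟩


instance (m r : ℕ) : DecidableRel (mKGraph m r).Adj := fun _ _ => instDecidableAnd

lemma prodSum_eq {V : Type*} [Fintype V] (G : SimpleGraph V) [Fintype G.edgeSet] (f : V → ℕ) :
    prodSum G f = ∑ e ∈ G.edgeFinset, Sym2.lift ⟨fun u v => f u * f v, fun _ _ => Nat.mul_comm _ _⟩ e := by
  unfold prodSum
  congr!

lemma two_mul_prodSum {V : Type*} [Fintype V] [DecidableEq V] (G : SimpleGraph V)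
    [DecidableRel G.Adj] (f : V → ℕ) :
    2 * prodSum G f = ∑ d : G.Dart, f d.fst * f d.snd := by
  classical
  rw [prodSum_eq]
  rw [← Finset.sum_fiberwise_of_maps_to (g := SimpleGraph.Dart.edge)
    (t := G.edgeFinset) (fun d _ => by rw [SimpleGraph.mem_edgeFinset]; exact d.edge_mem)]
  rw [Finset.mul_sum]
  refine Finset.sum_congr rfl fun e he => ?_
  have hcard : #(univ.filter (fun d : G.Dart => d.edge = e)) = 2 := by
    have := G.dart_edge_fiber_card e (SimpleGraph.mem_edgeFinset.mp he)
    simpa using this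
  have : ∀ d ∈ univ.filter (fun d : G.Dart => d.edge = e),
      f d.fst * f d.snd = Sym2.lift ⟨fun u v => f u * f v, fun _ _ => Nat.mul_comm _ _⟩ e := by
    intro d hd
    rw [Finset.mem_filter] at hd
    rw [← hd.2]
    rfl
  rw [Finset.sum_congr rfl this, Finset.sum_const, hcard, smul_eq_mul]

lemma sum_darts {V : Type*} [Fintype V] [DecidableEq V] (G : SimpleGraph V)
    [DecidableRel G.Adj] (f : V → ℕ) :
    ∑ d : G.Dart, f d.fst * f d.snd = ∑ a, ∑ b, if G.Adj a b then f a * f b else 0 := by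
  classical
  rw [← Finset.sum_product', ← Finset.sum_filter]
  refine Finset.sum_bij' (fun d _ => (d.fst, d.snd)) (fun p hp => ⟨p, (Finset.mem_filter.mp hp).2⟩) ?_ ?_ ?_ ?_ ?_ <;> simp

lemma star (m r : ℕ) (f : Fin m × Fin r → ℕ) :
    2 * prodSum (mKGraph m r) f + ∑ v : Fin m × Fin r, f v ^ 2
      = ∑ i : Fin m, (∑ x : Fin r, f (i, x)) ^ 2 := by
  rw [two_mul_prodSum, sum_darts]
  simp only [Fintype.sum_prod_type]
  have key : ∀ (i : Fin m) (x : Fin r),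
      (∑ i' : Fin m, ∑ y : Fin r, if (mKGraph m r).Adj (i, x) (i', y) then f (i, x) * f (i', y) else 0)
        = ∑ y : Fin r, if y ≠ x then f (i, x) * f (i, y) else 0 := by
    intro i x
    have : ∀ i' : Fin m, (∑ y : Fin r, if (mKGraph m r).Adj (i, x) (i', y) then f (i, x) * f (i', y) else 0)
        = if i' = i then (∑ y : Fin r, if y ≠ x then f (i, x) * f (i', y) else 0) else 0 := by
      intro i'
      by_cases h : i' = i
      · subst h; rw [if_pos rfl]
        refine Finset.sum_congr rfl fun y _ => ?_
        congr 1
        simp [mKGraph, ne_comm]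
      · rw [if_neg h, Finset.sum_eq_zero]
        intro y _
        rw [if_neg]
        simp only [mKGraph, not_and, ne_eq]
        intro hc; exact absurd hc.symm h
    rw [Finset.sum_congr rfl fun i' _ => this i', Finset.sum_ite_eq' univ i]
    simp
  rw [Finset.sum_congr rfl fun i _ => Finset.sum_congr rfl fun x _ => key i x,
    ← Finset.sum_add_distrib]
  refine Finset.sum_congr rfl fun i _ => ?_
  rw [sq, Finset.sum_mul_sum, ← Finset.sum_add_distrib]
  refine Finset.sum_congr rfl fun x _ => ?_
  rw [← Finset.sum_filter, Finset.filter_ne' univ x,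
    ← Finset.add_sum_erase _ (fun j => f (i, x) * f (i, j)) (Finset.mem_univ x)]
  ring

/-- label of vertex `(i,x)` in copies setting `m = 2k+1`, `r = 2h+3`. -/
def lab (k h i x : ℕ) : ℕ :=
  if x = 0 then i + 1
  else if x = 1 then (2*k+1) + (2*(k + (2*k+1) - i)) % (2*k+1) + 1
  else if x = 2 then 2*(2*k+1) + (i + k) % (2*k+1) + 1
  else if (x - 3) % 2 = 0 then 3*(2*k+1) + (i*h + (x-3)/2) + 1
  else (2*k+1)*(2*h+3) - (i*h + (x-3)/2)

lemma lab0 (k h i : ℕ) : lab k h i 0 = i + 1 := rfl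

lemma lab1 (k h i : ℕ) (hi : i ≤ 2*k) :
    lab k h i 1 = if i ≤ k then (2*k+1) + 2*(k-i) + 1 else (2*k+1) + (2*k+1-2*(i-k)) + 1 := by
  unfold lab
  norm_num
  by_cases hik : i ≤ k
  · rw [if_pos hik]
    have h1 : 2*(k + (2*k+1) - i) = 2*(k-i) + 2*(2*k+1) := by omega
    rw [h1, Nat.add_mul_mod_self_right, Nat.mod_eq_of_lt (by omega)]
  · rw [if_neg hik]
    have h1 : 2*(k + (2*k+1) - i) = (2*k+1-2*(i-k)) + 1*(2*k+1) := by omega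
    rw [h1, Nat.add_mul_mod_self_right, Nat.mod_eq_of_lt (by omega)]

lemma lab2 (k h i : ℕ) (hi : i ≤ 2*k) :
    lab k h i 2 = if i ≤ k then 2*(2*k+1) + (i+k) + 1 else 2*(2*k+1) + (i-k-1) + 1 := by
  unfold lab
  norm_num
  by_cases hik : i ≤ k
  · rw [if_pos hik, Nat.mod_eq_of_lt (by omega)]
  · rw [if_neg hik]
    have h1 : i + k = (i-k-1) + 1*(2*k+1) := by omega
    rw [h1, Nat.add_mul_mod_self_right, Nat.mod_eq_of_lt (by omega)]

lemma lab3 (k h i j : ℕ) : lab k h i (2*j+3) = 3*(2*k+1) + (i*h + j) + 1 := by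
  unfold lab
  have e1 : 2*j+3-3 = 2*j := by omega
  rw [if_neg (by omega), if_neg (by omega), if_neg (by omega), e1, if_pos (by omega)]
  congr 2
  omega

lemma lab4 (k h i j : ℕ) : lab k h i (2*j+4) = (2*k+1)*(2*h+3) - (i*h + j) := by
  unfold lab
  have e1 : 2*j+4-3 = 2*j+1 := by omega
  rw [if_neg (by omega), if_neg (by omega), if_neg (by omega), e1, if_neg (by omega)]
  congr 1
  omega

lemma pbound (k h i j : ℕ) (hi : i ≤ 2*k) (hj : j < h) : i*h + j + 1 ≤ (2*k+1) * h := by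
  have h1 : i*h ≤ 2*k*h := Nat.mul_le_mul_right _ hi
  have h2 : (2*k+1)*h = 2*k*h + h := by ring
  omega

lemma zone_split (h x : ℕ) (hx : x < 2*h+3) :
    x = 0 ∨ x = 1 ∨ x = 2 ∨ (∃ j, j < h ∧ x = 2*j+3) ∨ (∃ j, j < h ∧ x = 2*j+4) := by
  rcases Nat.lt_or_ge x 3 with h3 | h3
  · omega
  · rcases Nat.even_or_odd (x - 3) with ⟨j, hj⟩ | ⟨j, hj⟩
    · exact Or.inr (Or.inr (Or.inr (Or.inl ⟨j, by omega, by omega⟩)))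
    · exact Or.inr (Or.inr (Or.inr (Or.inr ⟨j, by omega, by omega⟩)))

lemma zone34_core (h i i' j j' : ℕ) (hj : j < h) (hj' : j' < h)
    (e : i*h + j = i'*h + j') : i = i' ∧ j = j' := by
  have hii : i = i' := by
    by_contra hne
    rcases lt_or_gt_of_ne hne with hlt | hgt
    · have h1 : (i+1) * h ≤ i' * h := Nat.mul_le_mul_right _ (by omega)
      rw [add_mul, one_mul] at h1
      omega
    · have h1 : (i'+1) * h ≤ i * h := Nat.mul_le_mul_right _ (by omega)
      rw [add_mul, one_mul] at h1
      omega
  refine ⟨hii, ?_⟩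
  subst hii
  omega

lemma labM (k h : ℕ) : (2*k+1)*(2*h+3) = 3*(2*k+1) + 2*((2*k+1)*h) := by ring

lemma lab_range (k h i x : ℕ) (hi : i ≤ 2*k) (hx : x < 2*h+3) :
    1 ≤ lab k h i x ∧ lab k h i x ≤ (2*k+1)*(2*h+3) := by
  have hM := labM k h
  rcases zone_split h x hx with rfl | rfl | rfl | ⟨j, hj, rfl⟩ | ⟨j, hj, rfl⟩
  · rw [lab0]; omega
  · rw [lab1 k h i hi]; split <;> omega
  · rw [lab2 k h i hi]; split <;> omega
  · rw [lab3]; have := pbound k h i j hi hj; omega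
  · rw [lab4]; have := pbound k h i j hi hj; omega

lemma lab_inj (k h i x i' x' : ℕ) (hi : i ≤ 2*k) (hi' : i' ≤ 2*k)
    (hx : x < 2*h+3) (hx' : x' < 2*h+3) (e : lab k h i x = lab k h i' x') :
    i = i' ∧ x = x' := by
  have hM := labM k h
  rcases zone_split h x hx with rfl | rfl | rfl | ⟨j, hj, rfl⟩ | ⟨j, hj, rfl⟩ <;>
      rcases zone_split h x' hx' with rfl | rfl | rfl | ⟨j', hj', rfl⟩ | ⟨j', hj', rfl⟩
  all_goals simp only [lab0, lab1 k h i hi, lab1 k h i' hi', lab2 k h i hi, lab2 k h i' hi',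
    lab3, lab4] at e
  all_goals try (have h1 := pbound k h i j hi hj)
  all_goals try (have h2 := pbound k h i' j' hi' hj')
  all_goals try split_ifs at e
  all_goals try omega
  all_goals (have h3 : i*h + j = i'*h + j' := by omega
             obtain ⟨rfl, rfl⟩ := zone34_core h i i' j j' hj hj' h3
             exact ⟨rfl, rfl⟩)

lemma sum_pairs (g : ℕ → ℕ) (c n : ℕ) (hg : ∀ j, j < n → g (2*j) + g (2*j+1) = c) :
    ∑ t ∈ Finset.range (2*n), g t = n * c := by
  induction n with
  | zero => simp
  | succ n ih =>
    have e1 : 2*(n+1) = (2*n+1)+1 := by ring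
    rw [e1, Finset.sum_range_succ, Finset.sum_range_succ,
      ih (fun j hj => hg j (by omega)), add_assoc, hg n (by omega)]
    ring

lemma row_sum (k h i : ℕ) (hi : i ≤ 2*k) :
    ∑ x ∈ Finset.range (2*h+3), lab k h i x = (2*h+3)*(2*k*h+3*k+h+2) := by
  have hM := labM k h
  have e1 : 2*h+3 = 3+2*h := by ring
  rw [e1, Finset.sum_range_add]
  have htriple : ∑ x ∈ Finset.range 3, lab k h i x = 9*k+6 := by
    rw [show (3:ℕ) = 2+1 from rfl, Finset.sum_range_succ, Finset.sum_range_succ,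
      Finset.sum_range_succ, Finset.sum_range_zero]
    rw [lab0, lab1 k h i hi, lab2 k h i hi]
    split_ifs <;> omega
  have hpairs : ∑ t ∈ Finset.range (2*h), lab k h i (3+t) = h * ((2*k+1)*(2*h+3) + 3*(2*k+1) + 1) := by
    refine sum_pairs (fun t => lab k h i (3+t)) _ h (fun j hj => ?_)
    have e2 : 3 + 2*j = 2*j+3 := by ring
    have e3 : 3 + (2*j+1) = 2*j+4 := by ring
    simp only [e2, e3, lab3, lab4]
    have h1 := pbound k h i j hi hj
    omega
  rw [htriple, hpairs]
  ring

lemma sum_Icc_id' (n : ℕ) : 2 * ∑ x ∈ Finset.Icc 1 n, x = n*(n+1) := by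
  induction n with
  | zero => simp
  | succ n ih =>
    rw [Finset.sum_Icc_succ_top (by omega), Nat.mul_add, ih]
    ring

lemma sum_Icc_sq' (n : ℕ) : 6 * ∑ x ∈ Finset.Icc 1 n, x^2 = n*(n+1)*(2*n+1) := by
  induction n with
  | zero => simp
  | succ n ih =>
    rw [Finset.sum_Icc_succ_top (by omega), Nat.mul_add, ih]
    ring

lemma label_sums {V : Type*} [Fintype V] (f : V → ℕ) (hf : IsLabeling V f) (g : ℕ → ℕ) :
    ∑ v, g (f v) = ∑ n ∈ Finset.Icc 1 (Fintype.card V), g n := by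
  classical
  have himgf : Finset.image f Finset.univ = Finset.Icc 1 (Fintype.card V) := by
    apply Finset.coe_injective
    rw [Finset.coe_image, Finset.coe_univ, Finset.coe_Icc]
    exact hf.image_eq
  rw [← himgf, Finset.sum_image (fun x _ y _ hxy =>
    hf.injOn (Set.mem_univ x) (Set.mem_univ y) hxy)]

/-- For odd `m ≥ 1` and odd `r ≥ 3`,
`M(mK_r) = mr²(mr+1)²/8 − mr(mr+1)(2mr+1)/12`. -/
theorem statement5 (m r : ℕ) (hm : 1 ≤ m) (hmodd : Odd m) (hr : 3 ≤ r) (hrodd : Odd r) :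
    (minPS (mKGraph m r) : ℚ) =
      (m : ℚ) * r ^ 2 * (m * r + 1) ^ 2 / 8 - m * r * (m * r + 1) * (2 * m * r + 1) / 12 := by
  classical
  obtain ⟨k, hk⟩ := hmodd
  obtain ⟨h, hh⟩ : ∃ h, r = 2*h + 3 := by
    obtain ⟨t, ht⟩ := hrodd
    exact ⟨t - 1, by omega⟩
  subst hk hh
  set m := 2*k+1 with hm'
  set r := 2*h+3 with hr'
  have hcard : Fintype.card (Fin m × Fin r) = m * r := by simp
  set N := m * r with hN
  set F : Fin m × Fin r → ℕ := fun v => lab k h v.1.val v.2.val with hF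
  have hvi : ∀ v : Fin m × Fin r, v.1.val ≤ 2*k := fun v => by have := v.1.isLt; omega
  have hvx : ∀ v : Fin m × Fin r, v.2.val < 2*h+3 := fun v => v.2.isLt
  have hinj : ∀ x ∈ (Finset.univ : Finset (Fin m × Fin r)), ∀ y ∈ Finset.univ,
      F x = F y → x = y := by
    intro a _ b _ hab
    obtain ⟨h1, h2⟩ := lab_inj k h _ _ _ _ (hvi a) (hvi b) (hvx a) (hvx b) hab
    exact Prod.ext (Fin.ext h1) (Fin.ext h2)
  have hrange : ∀ v : Fin m × Fin r, 1 ≤ F v ∧ F v ≤ N :=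
    fun v => lab_range k h v.1.val v.2.val (hvi v) (hvx v)
  have himg : Finset.image F Finset.univ = Finset.Icc 1 N := by
    apply Finset.eq_of_subset_of_card_le
    · intro b hb
      obtain ⟨v, _, rfl⟩ := Finset.mem_image.mp hb
      exact Finset.mem_Icc.mpr (hrange v)
    · rw [Finset.card_image_of_injOn (fun x hx y hy => hinj x hx y hy),
        Nat.card_Icc, Finset.card_univ, hcard]
      omega
  have hLab : IsLabeling (Fin m × Fin r) F := by
    rw [IsLabeling, hcard]
    refine ⟨fun v _ => Set.mem_Icc.mpr (hrange v), fun a _ b _ hab =>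
      hinj a (Finset.mem_univ a) b (Finset.mem_univ b) hab, ?_⟩
    intro n hn
    have hn' : n ∈ Finset.Icc 1 N := Finset.mem_Icc.mpr (Set.mem_Icc.mp hn)
    rw [← himg] at hn'
    obtain ⟨v, _, hv⟩ := Finset.mem_image.mp hn'
    exact ⟨v, Set.mem_univ v, hv⟩
  have hsums : ∀ (f : Fin m × Fin r → ℕ), IsLabeling (Fin m × Fin r) f → ∀ g : ℕ → ℕ,
      ∑ v, g (f v) = ∑ n ∈ Finset.Icc 1 N, g n := by
    intro f hf g
    have := label_sums f hf g
    rwa [hcard] at this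
  have hQ6 := sum_Icc_sq' N
  have hNmr : ((N : ℕ) : ℚ) = (m : ℚ) * (r : ℚ) := by rw [hN]; push_cast; ring
  -- row sums of F
  have hrowF : ∀ i : Fin m, ∑ x : Fin r, F (i, x) = (2*h+3)*(2*k*h+3*k+h+2) := by
    intro i
    have h1 := Fin.sum_univ_eq_sum_range (fun t => lab k h i.val t) (2*h+3)
    have h2 := row_sum k h i.val (by have := i.isLt; omega)
    exact h1.trans h2
  -- exact value of the product-sum of F
  have hPF : 2 * prodSum (mKGraph m r) F + ∑ n ∈ Finset.Icc 1 N, n^2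
      = m * ((2*h+3)*(2*k*h+3*k+h+2))^2 := by
    have hsq : ∑ v, (F v)^2 = ∑ n ∈ Finset.Icc 1 N, n^2 := hsums F hLab (fun n => n^2)
    rw [← hsq, star m r F]
    rw [Finset.sum_congr rfl (fun i (_ : i ∈ Finset.univ) => by rw [hrowF i]),
      Finset.sum_const, Finset.card_univ, Fintype.card_fin, smul_eq_mul]
  have hupper : (prodSum (mKGraph m r) F : ℚ)
      = (m : ℚ) * r ^ 2 * (m * r + 1) ^ 2 / 8 - m * r * (m * r + 1) * (2 * m * r + 1) / 12 := by
    have h1 := Nat.cast_inj (R := ℚ) |>.mpr hPF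
    have h2 := Nat.cast_inj (R := ℚ) |>.mpr hQ6
    push_cast [hN, hm', hr'] at h1 h2 ⊢
    linear_combination h1 / 2 - h2 / 12
  -- lower bound for an arbitrary labeling
  have hlower : ∀ f : Fin m × Fin r → ℕ, IsLabeling (Fin m × Fin r) f →
      (m : ℚ) * r ^ 2 * (m * r + 1) ^ 2 / 8 - m * r * (m * r + 1) * (2 * m * r + 1) / 12
        ≤ (prodSum (mKGraph m r) f : ℚ) := by
    intro f hf
    have hstar := star m r f
    have hsq : ∑ v, (f v)^2 = ∑ n ∈ Finset.Icc 1 N, n^2 := hsums f hf (fun n => n^2)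
    have hid : ∑ v, f v = ∑ n ∈ Finset.Icc 1 N, n := hsums f hf (fun n => n)
    rw [hsq] at hstar
    have hstarq : (2:ℚ) * (prodSum (mKGraph m r) f : ℚ) + ∑ n ∈ Finset.Icc 1 N, (n:ℚ)^2
        = ∑ i : Fin m, (∑ x : Fin r, (f (i,x) : ℚ))^2 := by exact_mod_cast hstar
    have cheb := sq_sum_le_card_mul_sum_sq
      (s := (Finset.univ : Finset (Fin m))) (f := fun i => ∑ x : Fin r, (f (i,x) : ℚ))
    rw [Finset.card_univ, Fintype.card_fin] at cheb
    have hT : ∑ i : Fin m, ∑ x : Fin r, (f (i,x) : ℚ) = (N:ℚ)*((N:ℚ)+1)/2 := by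
      have h6 : 2 * ∑ i : Fin m, ∑ x : Fin r, f (i,x) = N*(N+1) := by
        rw [← Fintype.sum_prod_type, hid]
        exact sum_Icc_id' N
      have h7 := Nat.cast_inj (R := ℚ) |>.mpr h6
      push_cast at h7
      linarith
    rw [hT] at cheb
    have h2 : (6:ℚ) * ∑ n ∈ Finset.Icc 1 N, (n:ℚ)^2
        = (N:ℚ)*((N:ℚ)+1)*(2*(N:ℚ)+1) := by
      have := Nat.cast_inj (R := ℚ) |>.mpr hQ6
      push_cast at this
      linarith
    rw [hNmr] at cheb h2
    have hmpos : (0:ℚ) < (m:ℚ) := by positivity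
    refine (mul_le_mul_iff_right₀ hmpos).mp ?_
    have e1 := congrArg (fun t => (m:ℚ) * t) hstarq
    have e2 := congrArg (fun t => (m:ℚ) * t) h2
    nlinarith [cheb, e1, e2]
  -- conclude
  have hne : {t | ∃ f, IsLabeling (Fin m × Fin r) f ∧ prodSum (mKGraph m r) f = t}.Nonempty :=
    ⟨_, F, hLab, rfl⟩
  have hmem : minPS (mKGraph m r) ∈
      {t | ∃ f, IsLabeling (Fin m × Fin r) f ∧ prodSum (mKGraph m r) f = t} :=
    Nat.sInf_mem hne
  obtain ⟨f₀, hf₀, hp₀⟩ := hmem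
  have hle : minPS (mKGraph m r) ≤ prodSum (mKGraph m r) F :=
    Nat.sInf_le ⟨F, hLab, rfl⟩
  refine le_antisymm ?_ ?_
  · calc (minPS (mKGraph m r) : ℚ) ≤ (prodSum (mKGraph m r) F : ℚ) := by exact_mod_cast hle
      _ = _ := hupper
  · have := hlower f₀ hf₀
    rw [hp₀] at this
    exact this
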